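/- arXiv:1707.00328 — 5 statements merged into one kernel-verified Lean document; each statement's English description precedes it below -/
import Mathlib

section
/- For all integers m, n and r, the identity ∑_{i=0}^{n} (-1)^i * C(r, i) * C(r + m - i, n - i) = C(m, n) holds, where C(a, b) denotes the integer binomial coefficient extended to negative upper arguments by C(a,b) = a(a-1)...(a-b+1)/b! for b ≥ 1, C(a,0) = 1, and C(a,b) = 0 for b < 0. -/
noncomputable section

/-- Binomial coefficient `C(m, n)` for integer `m` and natural `n`:
`C(m,n) = m(m-1)⋯(m-n+1)/n!`. -/
def ibin (m : ℤ) (n : ℕ) : ℤ :=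
  if 0 ≤ m then ((m.toNat.choose n : ℕ) : ℤ)
  else (-1) ^ n * ((((n : ℤ) - m - 1).toNat.choose n : ℕ) : ℤ)

/-- Binomial coefficient `C(m, n)` for integers `m, n`, zero when `n < 0`. -/
def ibinZ (m n : ℤ) : ℤ := if 0 ≤ n then ibin m n.toNat else 0

lemma ringChoose_neg_case (m : ℤ) (n : ℕ) (hm : m < 0) :
    Ring.choose m n = (-1) ^ n * ((((n : ℤ) - m - 1).toNat.choose n : ℕ) : ℤ) := by
  cases n with
  | zero => simp [Ring.choose_zero_right]
  | succ k =>
    have h1 : m - ((k + 1 : ℕ) : ℤ) + 1 = Int.negSucc ((k : ℤ) - m - 1).toNat := by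
      rw [Int.negSucc_eq]
      omega
    have h3 : ((((k : ℕ) + 1 : ℤ) - m - 1).toNat) = ((k : ℤ) - m - 1).toNat + 1 := by
      omega
    have h0 : Ring.choose m (k + 1) = Int.multichoose (m - ((k + 1 : ℕ) : ℤ) + 1) (k + 1) := rfl
    rw [h0, h1, Int.multichoose]
    congr 3
    omega

lemma ibin_eq_ringChoose (m : ℤ) (n : ℕ) : ibin m n = Ring.choose m n := by
  by_cases hm : 0 ≤ m
  · rw [ibin, if_pos hm]
    have h : m = ((m.toNat : ℕ) : ℤ) := by omega
    conv_rhs => rw [h]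
    rw [Ring.choose_natCast]
  · rw [ibin, if_neg hm, ringChoose_neg_case m n (by omega)]

/-- Reflection formula for the generalized binomial coefficient. -/
lemma ringChoose_reflect (m : ℤ) (n : ℕ) :
    Ring.choose m n = (-1) ^ n * Ring.choose ((n : ℤ) - m - 1) n := by
  have key : (descPochhammer ℤ n).eval m
      = (-1) ^ n * (descPochhammer ℤ n).eval ((n : ℤ) - m - 1) := by
    rw [descPochhammer_eval_eq_ascPochhammer (R := ℤ) m n,
      show m - (n : ℤ) + 1 = -((n : ℤ) - m - 1) by ring,
      ascPochhammer_eval_neg_eq_descPochhammer]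
  have h1 := Ring.descPochhammer_eq_factorial_smul_choose m n
  have h2 := Ring.descPochhammer_eq_factorial_smul_choose ((n : ℤ) - m - 1) n
  rw [Polynomial.eval_eq_smeval] at key
  rw [Polynomial.eval_eq_smeval] at key
  rw [h1, h2, nsmul_eq_mul, nsmul_eq_mul] at key
  have h6 : (n.factorial : ℤ) * Ring.choose m n
      = (n.factorial : ℤ) * ((-1) ^ n * Ring.choose ((n : ℤ) - m - 1) n) := by
    rw [key]; ring
  have hfac : ((n.factorial : ℤ)) ≠ 0 := by exact_mod_cast n.factorial_ne_zero
  exact mul_left_cancel₀ hfac h6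

/-- Chu–Vandermonde over range. -/
lemma ringChoose_vandermonde (a b : ℤ) (N : ℕ) :
    (∑ i ∈ Finset.range (N + 1), Ring.choose a i * Ring.choose b (N - i))
      = Ring.choose (a + b) N := by
  rw [Ring.add_choose_eq N (Commute.all a b)]
  rw [Finset.Nat.sum_antidiagonal_eq_sum_range_succ_mk]

/-- Appendix identity (bi4): for all integers `m, n, r`,
`∑_{i=0}^{n} (-1)^i C(r,i) C(r+m-i, n-i) = C(m,n)`. -/
theorem binom_alternating_sum_identity (m n r : ℤ) :
    (∑ i ∈ Finset.range ((n + 1).toNat),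
        (-1) ^ i * ibinZ r (i : ℤ) * ibinZ (r + m - (i : ℤ)) (n - (i : ℤ))) = ibinZ m n := by
  by_cases hn : 0 ≤ n
  · set N := n.toNat with hN
    have hn' : n = (N : ℤ) := by omega
    have htop : (n + 1).toNat = N + 1 := by omega
    rw [htop]
    have step : ∀ i ∈ Finset.range (N + 1),
        (-1) ^ i * ibinZ r (i : ℤ) * ibinZ (r + m - (i : ℤ)) (n - (i : ℤ))
          = (-1) ^ N * (Ring.choose r i * Ring.choose ((N : ℤ) - r - m - 1) (N - i)) := by
      intro i hi
      have hiN : i ≤ N := by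
        have := Finset.mem_range.mp hi; omega
      have h1 : ibinZ r (i : ℤ) = Ring.choose r i := by
        rw [ibinZ, if_pos (by positivity), Int.toNat_natCast, ibin_eq_ringChoose]
      have h2 : (n - (i : ℤ)).toNat = N - i := by omega
      have h3 : ibinZ (r + m - (i : ℤ)) (n - (i : ℤ)) = Ring.choose (r + m - (i : ℤ)) (N - i) := by
        rw [ibinZ, if_pos (by omega), h2, ibin_eq_ringChoose]
      rw [h1, h3, ringChoose_reflect (r + m - (i : ℤ)) (N - i)]
      have h4 : ((N - i : ℕ) : ℤ) - (r + m - (i : ℤ)) - 1 = (N : ℤ) - r - m - 1 := by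
        have : ((N - i : ℕ) : ℤ) = (N : ℤ) - i := by omega
        rw [this]; ring
      rw [h4]
      have h5 : ((-1 : ℤ)) ^ i * (-1) ^ (N - i) = (-1) ^ N := by
        rw [← pow_add, Nat.add_sub_cancel' hiN]
      rw [← h5]; ring
    rw [Finset.sum_congr rfl step, ← Finset.mul_sum,
      ringChoose_vandermonde r ((N : ℤ) - r - m - 1) N,
      show r + ((N : ℤ) - r - m - 1) = (N : ℤ) - m - 1 by ring,
      ← ringChoose_reflect m N, ibinZ, if_pos hn, ← hN, ibin_eq_ringChoose]
  · have h1 : (n + 1).toNat = 0 := by omega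
    rw [h1, Finset.range_zero, Finset.sum_empty, ibinZ, if_neg hn]
end
end

section
/- For every integer k ≥ 0, the greatest common divisor of the set of integers {C(k + i, i) : i ≥ 1} is 1, where C denotes the binomial coefficient. -/
open Nat

lemma choose_add_pow_modEq (p : ℕ) [Fact p.Prime] (k m : ℕ) (hk : k < p ^ m) :
    ((k + p ^ m).choose (p ^ m) : ℤ) ≡ 1 [ZMOD p] := by
  have hp := (Fact.out : p.Prime).two_le
  have hmain := Choose.choose_modEq_choose_mul_prod_range_choose
    (n := k + p ^ m) (k := p ^ m) (p := p) m
  refine hmain.trans ?_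
  have h1 : (k + p ^ m) / p ^ m = 1 := by
    rw [Nat.add_div_right _ (by positivity), Nat.div_eq_of_lt hk]
  have h2 : (p ^ m) / p ^ m = 1 := Nat.div_self (by positivity)
  rw [h1, h2]
  have h3 : ∀ i ∈ Finset.range m,
      ((k + p ^ m) / p ^ i % p).choose ((p ^ m) / p ^ i % p) = 1 := by
    intro i hi
    have hi' : i < m := Finset.mem_range.mp hi
    have hz : (p ^ m) / p ^ i % p = 0 := by
      rw [Nat.pow_div hi'.le (by omega)]
      exact Nat.mod_eq_zero_of_dvd (dvd_pow_self p (Nat.sub_ne_zero_of_lt hi'))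
    rw [hz, Nat.choose_zero_right]
  rw [Finset.prod_congr rfl h3]
  simp

/-- For every `k ≥ 0`, the gcd of `{C(k+i, i) : i ≥ 1}` is `1`: any common
divisor of all `C(k+i,i)` with `i ≥ 1` equals `1`. -/
theorem gcd_choose_shift_eq_one (k d : ℕ)
    (h : ∀ i : ℕ, 1 ≤ i → d ∣ (k + i).choose i) : d = 1 := by
  by_contra hd
  -- d ≠ 1. If d = 0, then 0 ∣ (k+1).choose 1 = k+1 > 0, contradiction.
  have hd0 : d ≠ 0 := by
    intro h0
    have := h 1 le_rfl
    rw [h0] at this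
    simp [Nat.choose_one_right] at this
  -- so d ≥ 2; pick a prime p ∣ d
  obtain ⟨p, hp, hpd⟩ := Nat.exists_prime_and_dvd hd
  haveI : Fact p.Prime := ⟨hp⟩
  obtain ⟨m, hm⟩ : ∃ m, k < p ^ m := ⟨k, Nat.lt_pow_self (n := k) hp.one_lt⟩
  have hdvd : (p : ℤ) ∣ ((k + p ^ m).choose (p ^ m) : ℤ) := by
    exact_mod_cast (hpd.trans (h (p ^ m) (Nat.one_le_pow _ _ hp.pos)))
  have hcong := choose_add_pow_modEq p k m hm
  have h1 : (p : ℤ) ∣ 1 := (dvd_sub_right hdvd).mp (Int.ModEq.dvd hcong.symm)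
  have := Int.le_of_dvd one_pos h1
  have := hp.two_le
  omega
end

section
/- Let V be a vertex ring and define D_m ∈ End(V) for m ≥ 0 by D_m(u) := u(-m-1)𝟙. Then D_0 = Id_V, the sequence (D_0, D_1, D_2, ...) is iterative, i.e., D_i ∘ D_j = C(i+j, i) · D_{i+j} for all i, j ≥ 0, and it is a Hasse-Schmidt derivation: D_m(u(n)v) = ∑_{i+j=m} (D_i u)(n)(D_j v) for all u, v ∈ V, n ∈ ℤ, m ≥ 0. -/
noncomputable section

/-- A vertex ring structure on an additive abelian group `V`: biadditive
products `mul n u v = u(n)v` for all `n : ℤ`, a vacuum element `one = 𝟙`,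
satisfying truncation, the vacuum axioms, and the Jacobi identity. -/
structure VertexRing (V : Type*) [AddCommGroup V] where
  mul : ℤ → V → V → V
  one : V
  add_left : ∀ (n : ℤ) (u u' v : V), mul n (u + u') v = mul n u v + mul n u' v
  add_right : ∀ (n : ℤ) (u v v' : V), mul n u (v + v') = mul n u v + mul n u v'
  trunc : ∀ u v : V, ∃ n₀ : ℤ, 0 ≤ n₀ ∧ ∀ n : ℤ, n₀ ≤ n → mul n u v = 0
  vac_create : ∀ u : V, mul (-1) u one = u
  vac_ann : ∀ (u : V) (n : ℤ), 0 ≤ n → mul n u one = 0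
  jacobi : ∀ (r s t : ℤ) (u v w : V),
      (∑ᶠ i : ℕ, ibin r i • mul (r + s - (i : ℤ)) (mul (t + (i : ℤ)) u v) w) =
      (∑ᶠ i : ℕ, ((-1) ^ i * ibin t i) •
        (mul (r + t - (i : ℤ)) u (mul (s + (i : ℤ)) v w)
          - (((-1 : ℤˣ) ^ t : ℤˣ) : ℤ) • mul (s + t - (i : ℤ)) v (mul (r + (i : ℤ)) u w)))

/-- The canonical Hasse–Schmidt derivation of a vertex ring: `D m u = u(-m-1)𝟙`. -/
def VertexRing.D {V : Type*} [AddCommGroup V] (R : VertexRing V) (m : ℕ) (u : V) : V :=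
  R.mul (-(m : ℤ) - 1) u R.one

/-- The center of a vertex ring: states whose vertex operator is the constant
`u(-1)`, i.e. `u(n) = 0` for all `n ≠ -1`. -/
def VertexRing.center {V : Type*} [AddCommGroup V] (R : VertexRing V) : Set V :=
  {u | ∀ n : ℤ, n ≠ -1 → ∀ v : V, R.mul n u v = 0}

-- helper lemmas
lemma ibin_zero_right (m : ℤ) : ibin m 0 = 1 := by
  unfold ibin; split <;> simp

lemma ibin_zero_left {i : ℕ} (h : i ≠ 0) : ibin 0 i = 0 := by
  unfold ibin
  rw [if_pos le_rfl]
  simp [Nat.choose_eq_zero_of_lt (Nat.pos_of_ne_zero h)]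

lemma ibin_neg_nat (j i : ℕ) : ibin (-(j:ℤ) - 1) i = (-1) ^ i * ((i + j).choose i : ℤ) := by
  unfold ibin
  rw [if_neg (by omega)]
  have e : ((i:ℤ) - (-(j:ℤ) - 1) - 1).toNat = i + j := by omega
  rw [e]

lemma ibin_neg_one (i : ℕ) : ibin (-1) i = (-1) ^ i := by
  have h := ibin_neg_nat 0 i
  norm_num at h
  exact h

lemma ibin_of_nonneg {s : ℤ} (hs : 0 ≤ s) (j : ℕ) : ibin s j = (s.toNat.choose j : ℤ) := by
  unfold ibin; rw [if_pos hs]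

lemma units_neg_one_zpow (m : ℕ) :
    (((-1 : ℤˣ) ^ (-(m:ℤ) - 1) : ℤˣ) : ℤ) = (-1) ^ (m + 1) := by
  have e : -(m:ℤ) - 1 = -((m+1 : ℕ) : ℤ) := by push_cast; ring
  rw [e, zpow_neg, zpow_natCast, Int.units_inv_eq_self]
  simp [Units.val_pow_eq_pow_val]

lemma unit_smul_cancel {V : Type*} [AddCommGroup V] {e : ℤˣ} {x y : V}
    (h : ((e:ℤ)) • x = y) : x = (e:ℤ) • y := by
  rw [← h, smul_smul, ← Units.val_mul, Int.units_mul_self, Units.val_one, one_smul]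

namespace VertexRing

variable {V : Type*} [AddCommGroup V] (R : VertexRing V)

lemma mul_zero_right (n : ℤ) (u : V) : R.mul n u 0 = 0 := by
  have h := R.add_right n u 0 0
  rw [add_zero] at h
  exact right_eq_add.mp h

lemma mul_zero_left (n : ℤ) (v : V) : R.mul n 0 v = 0 := by
  have h := R.add_left n 0 0 v
  rw [add_zero] at h
  exact right_eq_add.mp h

lemma lemA (s t : ℤ) (u v : V) :
    R.mul s (R.mul t u v) R.one
      = ∑ᶠ i : ℕ, ((-1) ^ i * ibin t i) • R.mul (t - (i:ℤ)) u (R.mul (s + (i:ℤ)) v R.one) := by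
  have h := R.jacobi 0 s t u v R.one
  rw [finsum_eq_single _ 0 (fun i hi => by rw [ibin_zero_left hi, zero_smul])] at h
  simp only [Nat.cast_zero, add_zero, sub_zero, zero_add, ibin_zero_right, one_smul] at h
  rw [h]
  apply finsum_congr
  intro i
  rw [R.vac_ann u (i:ℤ) (by positivity), R.mul_zero_right, smul_zero, sub_zero]

lemma lemSkew (t : ℤ) (u v : V) :
    (∑ᶠ i : ℕ, ((-1:ℤ) ^ i) • R.mul (-1 - (i:ℤ)) (R.mul (t + (i:ℤ)) u v) R.one)
      = -((((-1 : ℤˣ) ^ t : ℤˣ) : ℤ) • R.mul t v u) := by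
  have h := R.jacobi (-1) 0 t u v R.one
  conv at h => rhs; rw [finsum_eq_single _ 0 (fun i hi => by
    rw [R.vac_ann v (0 + (i:ℤ)) (by positivity), R.vac_ann u (-1 + (i:ℤ)) (by omega),
      R.mul_zero_right, R.mul_zero_right, smul_zero, sub_zero, smul_zero])]
  simp only [Nat.cast_zero, add_zero, zero_add, sub_zero, pow_zero, one_mul, ibin_zero_right,
    one_smul] at h
  rw [R.vac_ann v 0 le_rfl, R.mul_zero_right, R.vac_create u, zero_sub] at h
  rw [← h]
  exact finsum_congr fun i => by rw [ibin_neg_one]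

lemma d_zero : ∀ m : ℕ, 1 ≤ m → R.mul (-(m:ℤ) - 1) R.one R.one = 0 := by
  intro m
  induction m using Nat.strong_induction_on with
  | _ m ih =>
    intro hm
    have h := R.lemSkew (-(m:ℤ) - 1) R.one R.one
    rw [finsum_eq_finset_sum_of_support_subset _ (s := ({0, m} : Finset ℕ)) ?side] at h
    case side =>
      intro i hi
      simp only [Function.mem_support, ne_eq] at hi
      by_contra hmem
      simp only [Finset.coe_insert, Finset.coe_singleton, Set.mem_insert_iff,
        Set.mem_singleton_iff, not_or] at hmem
      obtain ⟨h0, hM⟩ := hmem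
      apply hi
      rcases lt_or_ge i m with hlt | hge
      · rw [show (-(m:ℤ) - 1 + (i:ℤ)) = -(((m - i : ℕ)):ℤ) - 1 by omega,
          ih (m - i) (by omega) (by omega), R.mul_zero_left, smul_zero]
      · rw [R.vac_ann R.one (-(m:ℤ) - 1 + (i:ℤ)) (by omega), R.mul_zero_left, smul_zero]
    rw [Finset.sum_pair (by omega : (0:ℕ) ≠ m)] at h
    simp only [Nat.cast_zero, pow_zero, one_smul, sub_zero, add_zero] at h
    rw [R.vac_create, show (-(m:ℤ) - 1 + (m:ℤ)) = -1 by ring, R.vac_create,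
      show (-1 - (m:ℤ)) = -(m:ℤ) - 1 by ring, units_neg_one_zpow] at h
    have h2 : R.mul (-(m:ℤ) - 1) R.one R.one + (-1:ℤ)^m • R.mul (-(m:ℤ) - 1) R.one R.one
        = (-1:ℤ)^m • R.mul (-(m:ℤ) - 1) R.one R.one := by
      rw [h, ← neg_smul]
      congr 1
      ring
    have h3 := add_eq_right.mp h2
    exact h3

lemma iter (a b : ℕ) (u : V) :
    R.mul (-(a:ℤ) - 1) (R.mul (-(b:ℤ) - 1) u R.one) R.one
      = (((a+b).choose a : ℕ) : ℤ) • R.mul (-((a+b : ℕ):ℤ) - 1) u R.one := by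
  have h := R.lemA (-(a:ℤ) - 1) (-(b:ℤ) - 1) u R.one
  rw [finsum_eq_single _ a (fun k hk => by
    rcases lt_or_ge k a with hlt | hge
    · rw [show (-(a:ℤ) - 1 + (k:ℤ)) = -(((a - k : ℕ)):ℤ) - 1 by omega,
        R.d_zero (a - k) (by omega), R.mul_zero_right, smul_zero]
    · rw [R.vac_ann R.one (-(a:ℤ) - 1 + (k:ℤ)) (by omega), R.mul_zero_right, smul_zero])] at h
  rw [show (-(a:ℤ) - 1 + (a:ℤ)) = -1 by ring, R.vac_create,
    show (-(b:ℤ) - 1 - (a:ℤ)) = -((a+b : ℕ):ℤ) - 1 by push_cast; ring,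
    ibin_neg_nat b a, ← mul_assoc, ← mul_pow] at h
  simp only [neg_mul_neg, mul_one, one_pow, one_mul] at h
  exact h

lemma one_mul_eq (t : ℤ) (w : V) : R.mul t R.one w = (if t = -1 then w else 0) := by
  have h := R.lemSkew t w R.one
  rcases le_or_gt 0 t with ht | ht
  · rw [if_neg (by omega)]
    rw [finsum_eq_zero_of_forall_eq_zero (fun i => by
      rw [R.vac_ann w (t + (i:ℤ)) (by positivity), R.mul_zero_left, smul_zero])] at h
    have hx : ((((-1:ℤˣ)^t : ℤˣ)):ℤ) • R.mul t R.one w = 0 := neg_eq_zero.mp h.symm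
    have h2 := unit_smul_cancel hx
    simpa using h2
  · obtain ⟨k, rfl⟩ : ∃ k : ℕ, t = -(k:ℤ) - 1 := ⟨(-t-1).toNat, by omega⟩
    rw [finsum_eq_finset_sum_of_support_subset _ (s := Finset.range (k+1)) ?side] at h
    case side =>
      intro i hi
      simp only [Function.mem_support, ne_eq] at hi
      simp only [Finset.coe_range, Set.mem_Iio]
      by_contra hge
      push_neg at hge
      exact hi (by
        rw [R.vac_ann w (-(k:ℤ) - 1 + (i:ℤ)) (by omega), R.mul_zero_left, smul_zero])
    have hterm : ∀ i ∈ Finset.range (k+1),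
        ((-1:ℤ)^i) • R.mul (-1 - (i:ℤ)) (R.mul (-(k:ℤ) - 1 + (i:ℤ)) w R.one) R.one
          = ((-1:ℤ)^i * ((k.choose i : ℕ):ℤ)) • R.mul (-(k:ℤ) - 1) w R.one := by
      intro i hi
      have hik : i ≤ k := by simpa [Nat.lt_succ_iff] using hi
      rw [show (-(k:ℤ) - 1 + (i:ℤ)) = -((k - i : ℕ):ℤ) - 1 by omega,
        show (-1 - (i:ℤ)) = -(i:ℤ) - 1 by ring,
        R.iter i (k - i) w, show i + (k - i) = k from by omega, smul_smul]
    rw [Finset.sum_congr rfl hterm, ← Finset.sum_smul, Int.alternating_sum_range_choose,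
      units_neg_one_zpow] at h
    rcases Nat.eq_zero_or_pos k with rfl | hk
    · rw [if_pos rfl, one_smul, show -((0:ℕ):ℤ) - 1 = -1 by norm_num] at h
      rw [R.vac_create] at h
      rw [show ((-1:ℤ))^(0+1) = -1 by norm_num, neg_smul, neg_neg, one_smul] at h
      rw [show -((0:ℕ):ℤ) - 1 = -1 by norm_num, if_pos rfl]
      exact h.symm
    · rw [if_neg (by omega), zero_smul] at h
      rw [if_neg (by omega)]
      have h2 : R.mul (-(k:ℤ) - 1) R.one w
          = (-1:ℤ)^(k+1) • ((-1:ℤ)^(k+1) • R.mul (-(k:ℤ) - 1) R.one w) := by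
        rw [smul_smul, ← mul_pow]
        norm_num
      rw [neg_eq_zero.mp h.symm, smul_zero] at h2
      exact h2

lemma one_mul_ne (t : ℤ) (ht : t ≠ -1) (w : V) : R.mul t R.one w = 0 := by
  rw [R.one_mul_eq, if_neg ht]

lemma one_mul_create (w : V) : R.mul (-1) R.one w = w := by
  rw [R.one_mul_eq, if_pos rfl]

lemma lemB (j : ℕ) (s : ℤ) (u w : V) :
    R.mul s (R.mul (-(j:ℤ) - 1) u R.one) w
      = ((-1)^j * ibin s j) • R.mul (s - (j:ℤ)) u w := by
  have h := R.jacobi 0 s (-(j:ℤ) - 1) u R.one w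
  rw [finsum_eq_single _ 0 (fun i hi => by rw [ibin_zero_left hi, zero_smul])] at h
  simp only [Nat.cast_zero, add_zero, sub_zero, zero_add, ibin_zero_right, one_smul] at h
  rw [h]
  rcases lt_or_ge s 0 with hs | hs
  · -- s ≤ -1
    set i₀ : ℕ := (-1 - s).toNat with hdef
    have hi₀ : (i₀:ℤ) = -1 - s := by omega
    rw [finsum_eq_single _ i₀ (fun i hi => by
      rw [R.one_mul_ne (s + (i:ℤ)) (by omega) w, R.mul_zero_right,
        R.one_mul_ne (s + (-(j:ℤ) - 1) - (i:ℤ)) (by omega) (R.mul (i:ℤ) u w),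
        smul_zero, sub_zero, smul_zero])]
    rw [show s + (i₀:ℤ) = -1 by omega, R.one_mul_create w,
      R.one_mul_ne (s + (-(j:ℤ) - 1) - (i₀:ℤ)) (by omega) (R.mul (i₀:ℤ) u w),
      smul_zero, sub_zero, show (-(j:ℤ) - 1 - (i₀:ℤ)) = s - (j:ℤ) by omega]
    congr 1
    rw [ibin_neg_nat j i₀]
    unfold ibin
    rw [if_neg (by omega : ¬ (0:ℤ) ≤ s)]
    have e1 : ((j:ℤ) - s - 1).toNat = i₀ + j := by omega
    have e2 : (i₀ + j).choose i₀ = (i₀ + j).choose j := by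
      rw [← Nat.choose_symm (Nat.le_add_left j i₀), Nat.add_sub_cancel]
    rw [e1, e2, ← mul_assoc, ← mul_assoc, ← mul_pow, ← mul_pow]
    norm_num
  · rcases lt_or_ge s (j:ℤ) with hsj | hsj
    · -- 0 ≤ s < j
      rw [finsum_eq_zero_of_forall_eq_zero (fun i => by
        rw [R.one_mul_ne (s + (i:ℤ)) (by omega) w, R.mul_zero_right,
          R.one_mul_ne (s + (-(j:ℤ) - 1) - (i:ℤ)) (by omega) (R.mul (i:ℤ) u w),
          smul_zero, sub_zero, smul_zero])]
      rw [ibin_of_nonneg hs j, Nat.choose_eq_zero_of_lt (by omega)]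
      norm_num
    · -- 0 ≤ j ≤ s
      set i₂ : ℕ := (s - j).toNat with hdef
      have hi₂ : (i₂:ℤ) = s - j := by omega
      rw [finsum_eq_single _ i₂ (fun i hi => by
        rw [R.one_mul_ne (s + (i:ℤ)) (by omega) w, R.mul_zero_right,
          R.one_mul_ne (s + (-(j:ℤ) - 1) - (i:ℤ)) (by omega) (R.mul (i:ℤ) u w),
          smul_zero, sub_zero, smul_zero])]
      rw [R.one_mul_ne (s + (i₂:ℤ)) (by omega) w, R.mul_zero_right,
        show s + (-(j:ℤ) - 1) - (i₂:ℤ) = -1 by omega,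
        R.one_mul_create (R.mul (i₂:ℤ) u w), zero_sub, units_neg_one_zpow,
        smul_neg, smul_smul, ← neg_smul, hi₂]
      congr 1
      rw [ibin_neg_nat j i₂, ibin_of_nonneg hs j]
      have e1 : s.toNat = i₂ + j := by omega
      have e2 : (i₂ + j).choose i₂ = (i₂ + j).choose j := by
        rw [← Nat.choose_symm (Nat.le_add_left j i₂), Nat.add_sub_cancel]
      rw [e1, e2]
      have sq : ((-1:ℤ))^i₂ * (-1)^i₂ = 1 := by rw [← mul_pow]; norm_num
      linear_combination (-(((-1:ℤ)^(j+1)) * (((i₂+j).choose j : ℕ) : ℤ))) * sq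

end VertexRing

/-- The canonical operators `D_m u = u(-m-1)𝟙` form an iterative Hasse–Schmidt
derivation of the vertex ring: `D_0 = Id`, `D_i ∘ D_j = C(i+j, i) D_{i+j}`, and
`D_m(u(n)v) = ∑_{i+j=m} (D_i u)(n)(D_j v)`. -/
theorem canonical_HS_derivation {V : Type*} [AddCommGroup V] (R : VertexRing V) :
    (∀ u : V, R.D 0 u = u) ∧
    (∀ (i j : ℕ) (u : V), R.D i (R.D j u) = (i + j).choose i • R.D (i + j) u) ∧
    (∀ (m : ℕ) (n : ℤ) (u v : V),
      R.D m (R.mul n u v)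
        = ∑ i ∈ Finset.range (m + 1), R.mul n (R.D i u) (R.D (m - i) v)) := by
  refine ⟨fun u => ?_, fun i j u => ?_, fun m n u v => ?_⟩
  · simp only [VertexRing.D, Nat.cast_zero, neg_zero, zero_sub]
    exact R.vac_create u
  · simp only [VertexRing.D]
    rw [← natCast_zsmul]
    exact R.iter i j u
  · have h := R.lemA (-(m:ℤ) - 1) n u v
    rw [finsum_eq_finset_sum_of_support_subset _ (s := Finset.range (m+1)) ?side] at h
    case side =>
      intro k hk
      simp only [Function.mem_support, ne_eq] at hk
      simp only [Finset.coe_range, Set.mem_Iio]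
      by_contra hge
      push_neg at hge
      exact hk (by
        rw [R.vac_ann v (-(m:ℤ) - 1 + (k:ℤ)) (by omega), R.mul_zero_right, smul_zero])
    simp only [VertexRing.D]
    rw [h]
    refine Finset.sum_congr rfl fun k hk => ?_
    have hkm : k ≤ m := by simpa [Nat.lt_succ_iff] using hk
    rw [R.lemB k n u, show (-(m:ℤ) - 1 + (k:ℤ)) = -((m - k : ℕ):ℤ) - 1 by omega]
end
end

section
/- Let V be a vertex ring. For states u, v ∈ V the following are equivalent: (a) the modes commute, [u(r), v(s)] = 0 for all r, s ∈ ℤ; (b) u(n)v = 0 for all n ≥ 0. -/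
noncomputable section

lemma VertexRing.mul_zero_left_s7 {V : Type*} [AddCommGroup V] (R : VertexRing V)
    (n : ℤ) (v : V) : R.mul n 0 v = 0 := by
  have h := R.add_left n 0 0 v
  rw [add_zero] at h
  exact left_eq_add.mp h

lemma VertexRing.mul_zero_right_s7 {V : Type*} [AddCommGroup V] (R : VertexRing V)
    (n : ℤ) (u : V) : R.mul n u 0 = 0 := by
  have h := R.add_right n u 0 0
  rw [add_zero] at h
  exact left_eq_add.mp h

lemma ibin_zero (i : ℕ) (hi : i ≠ 0) : ibin 0 i = 0 := by
  simp [ibin, Nat.choose_eq_zero_of_lt (Nat.pos_of_ne_zero hi)]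

lemma VertexRing.commutator {V : Type*} [AddCommGroup V] (R : VertexRing V)
    (r s : ℤ) (u v w : V) :
    R.mul r u (R.mul s v w) - R.mul s v (R.mul r u w)
      = ∑ᶠ i : ℕ, ibin r i • R.mul (r + s - (i : ℤ)) (R.mul (i : ℤ) u v) w := by
  have h := R.jacobi r s 0 u v w
  nth_rewrite 2 [finsum_eq_single _ 0 (fun i hi => by
    rw [ibin_zero i hi, mul_zero, zero_smul])] at h
  have h00 : ibin 0 0 = 1 := by simp [ibin]
  simp only [h00, pow_zero, one_mul, zpow_zero, Units.val_one, one_smul, Nat.cast_zero,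
    add_zero, zero_add] at h
  simpa using h.symm

/-- The modes of `u` and `v` commute iff `u(n)v = 0` for all `n ≥ 0`. -/
theorem commuting_modes_iff {V : Type*} [AddCommGroup V] (R : VertexRing V) (u v : V) :
    (∀ (r s : ℤ) (w : V), R.mul r u (R.mul s v w) = R.mul s v (R.mul r u w)) ↔
    (∀ n : ℤ, 0 ≤ n → R.mul n u v = 0) := by
  constructor
  · intro hcomm
    -- the key step: if all higher products vanish, so does the current one
    have key : ∀ n : ℤ, 0 ≤ n → (∀ j : ℤ, 0 ≤ j → n < j → R.mul j u v = 0) →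
        R.mul n u v = 0 := by
      intro n hn hj
      have h := R.commutator n (-1) u v R.one
      rw [sub_eq_zero.mpr (hcomm n (-1) R.one)] at h
      rw [finsum_eq_single _ n.toNat (fun i hi => by
        rcases lt_or_gt_of_ne hi with hlt | hgt
        · rw [R.vac_ann _ (n + -1 - (i : ℤ)) (by omega), smul_zero]
        · rw [hj (i : ℤ) (by positivity) (by omega), R.mul_zero_left_s7, smul_zero])] at h
      rw [Int.toNat_of_nonneg hn] at h
      have hn1 : n + -1 - n = -1 := by ring
      rw [hn1, R.vac_create] at h
      have hbin : ibin n n.toNat = 1 := by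
        simp [ibin, if_pos hn, Nat.choose_self]
      rw [hbin, one_smul] at h
      exact h.symm
    intro n hn
    obtain ⟨N, hN0, hN⟩ := R.trunc u v
    have main : ∀ k : ℕ, ∀ m : ℤ, 0 ≤ m → N ≤ m + k → R.mul m u v = 0 := by
      intro k
      induction k with
      | zero => intro m hm hNm; exact hN m (by simpa using hNm)
      | succ k ih =>
        intro m hm hNm
        exact key m hm fun j hj hmj => ih j hj (by omega)
    exact main N.toNat n hn (by omega)
  · intro hvan r s w
    have h := R.commutator r s u v w
    rw [finsum_eq_zero_of_forall_eq_zero (fun i => by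
      rw [hvan (i : ℤ) (by positivity), R.mul_zero_left_s7, smul_zero])] at h
    exact sub_eq_zero.mp h
end
end

section
/- Let V be a simple vertex ring (no 2-sided ideals other than 0 and V). Then the center C(V), with product u·v = u(-1)v, is a field. -/
noncomputable section

/-- `I` is a 2-sided ideal of the vertex ring `R`. -/
def VertexRing.IsTwoSidedIdeal {V : Type*} [AddCommGroup V] (R : VertexRing V)
    (I : AddSubgroup V) : Prop :=
  ∀ (a u : V) (n : ℤ), u ∈ I → R.mul n a u ∈ I ∧ R.mul n u a ∈ I

namespace Aux

lemma ibin_zero_right (m : ℤ) : ibin m 0 = 1 := by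
  unfold ibin; split <;> simp

lemma ibin_zero_left {i : ℕ} (hi : i ≠ 0) : ibin 0 i = 0 := by
  unfold ibin
  simp [Nat.choose_eq_zero_of_lt (Nat.pos_of_ne_zero hi)]

lemma ibin_neg_one (i : ℕ) : ibin (-1) i = (-1) ^ i := by
  unfold ibin
  rw [if_neg (by norm_num)]
  norm_num

lemma eps_neg_one : (((-1 : ℤˣ) ^ (-1 : ℤ) : ℤˣ) : ℤ) = -1 := by decide

variable {V : Type*} [AddCommGroup V] (R : VertexRing V)

lemma mul_zero_right (n : ℤ) (u : V) : R.mul n u 0 = 0 := by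
  have h := R.add_right n u 0 0
  rw [add_zero] at h
  exact (left_eq_add.mp h)

lemma mul_zero_left (n : ℤ) (v : V) : R.mul n 0 v = 0 := by
  have h := R.add_left n 0 0 v
  rw [add_zero] at h
  exact (left_eq_add.mp h)

lemma mul_neg_right (n : ℤ) (u v : V) : R.mul n u (-v) = -R.mul n u v := by
  have h := R.add_right n u v (-v)
  rw [add_neg_cancel, mul_zero_right] at h
  exact (neg_eq_of_add_eq_zero_right h.symm).symm

lemma mul_neg_left (n : ℤ) (u v : V) : R.mul n (-u) v = -R.mul n u v := by
  have h := R.add_left n u (-u) v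
  rw [add_neg_cancel, mul_zero_left] at h
  exact (neg_eq_of_add_eq_zero_right h.symm).symm

/-- `𝟙(t)u = 0` for `t ≥ 0`. -/
lemma one_mul_nonneg {t : ℤ} (ht : 0 ≤ t) (u : V) : R.mul t R.one u = 0 := by
  have J := R.jacobi (-1) 0 t u R.one R.one
  rw [finsum_eq_single _ 0 (by
    intro i hi
    rw [R.vac_ann u (t + i) (by positivity), mul_zero_left, smul_zero])] at J
  rw [finsum_eq_single _ 0 (by
    intro i hi
    rw [R.vac_ann R.one (0 + i) (by positivity),
      R.vac_ann u (-1 + i) (by omega), mul_zero_right, mul_zero_right, smul_zero,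
      sub_zero, smul_zero])] at J
  simp only [Nat.cast_zero, add_zero, sub_zero, zero_add, ibin_zero_right, pow_zero,
    one_mul, one_smul] at J
  rw [R.vac_ann u t ht, mul_zero_left, R.vac_ann R.one 0 le_rfl, mul_zero_right,
    R.vac_create, zero_sub] at J
  rcases Int.units_eq_one_or ((-1 : ℤˣ) ^ t) with h | h <;> rw [h] at J <;>
    [skip; rw [Units.val_neg, Units.val_one, neg_smul, neg_neg] at J] <;>
    simpa using J.symm

/-- `𝟙(-1)u = u`. -/
lemma one_mul_neg_one (u : V) : R.mul (-1) R.one u = u := by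
  have J := R.jacobi (-1) 0 (-1) u R.one R.one
  rw [finsum_eq_single _ 0 (by
    intro i hi
    rw [R.vac_ann u (-1 + i) (by omega), mul_zero_left, smul_zero])] at J
  rw [finsum_eq_single _ 0 (by
    intro i hi
    rw [R.vac_ann R.one (0 + i) (by positivity), mul_zero_right,
      R.vac_ann u (-1 + i) (by omega), mul_zero_right, smul_zero, sub_zero, smul_zero])] at J
  simp only [Nat.cast_zero, add_zero, sub_zero, zero_add, ibin_zero_right, pow_zero,
    one_mul, one_smul, eps_neg_one] at J
  rw [R.vac_create, R.vac_create, R.vac_ann R.one 0 le_rfl, mul_zero_right] at J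
  simpa using J.symm

/-- `𝟙(-k)w = 0` for `k ≥ 2`. -/
lemma one_mul_neg : ∀ k : ℕ, 2 ≤ k → ∀ w : V, R.mul (-(k : ℤ)) R.one w = 0 := by
  intro k
  induction k using Nat.strong_induction_on with
  | _ k IH =>
    intro hk w
    have J := R.jacobi 0 (-(k : ℤ)) (-1) R.one R.one w
    rw [finsum_eq_single _ 0 (by
      intro i hi
      rw [ibin_zero_left hi, zero_smul])] at J
    rw [finsum_eq_finset_sum_of_support_subset _
      (s := ({0, k - 1} : Finset ℕ)) (by
        rw [Function.support_subset_iff']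
        intro i hi
        simp only [Finset.coe_insert, Finset.coe_singleton, Set.mem_insert_iff,
          Set.mem_singleton_iff, not_or] at hi
        obtain ⟨hi0, hik⟩ := hi
        have h2 : R.mul (-(k : ℤ) + i) R.one w = 0 := by
          rcases le_or_gt (k : ℤ) (i : ℤ) with h | h
          · exact one_mul_nonneg R (by omega) w
          · have he : (-(k : ℤ) + i) = -((k - i : ℕ) : ℤ) := by omega
            rw [he]
            exact IH (k - i) (by omega) (by omega) w
        rw [h2, mul_zero_right, one_mul_nonneg R (by positivity) w, mul_zero_right,
          smul_zero, sub_zero, smul_zero])] at J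
    rw [Finset.sum_pair (show (0 : ℕ) ≠ k - 1 by omega)] at J
    simp only [Nat.cast_zero, add_zero, sub_zero, zero_add, pow_zero, ibin_zero_right,
      ibin_neg_one, one_mul, one_smul, eps_neg_one] at J
    rw [R.vac_create, one_mul_neg_one, one_mul_nonneg R le_rfl w, mul_zero_right,
      smul_zero, sub_zero] at J
    rw [show ((-1 : ℤ) ^ (k - 1) * (-1) ^ (k - 1)) = 1 by
      rw [← mul_pow]; norm_num] at J
    rw [show ((-1 : ℤ) - ((k - 1 : ℕ) : ℤ)) = -(k : ℤ) by omega] at J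
    rw [show (-(k : ℤ) + ((k - 1 : ℕ) : ℤ)) = -1 by omega] at J
    rw [one_mul_neg_one, one_mul_nonneg R (t := ((k - 1 : ℕ) : ℤ)) (by positivity) w,
      mul_zero_right, smul_zero, sub_zero, one_smul] at J
    exact add_eq_left.mp J.symm


/-- `𝟙` is central. -/
lemma one_center (n : ℤ) (hn : n ≠ -1) (w : V) : R.mul n R.one w = 0 := by
  rcases le_or_gt 0 n with h | h
  · exact one_mul_nonneg R h w
  · have hk : n = -(((-n).toNat : ℕ) : ℤ) := by omega
    rw [hk]
    exact one_mul_neg R (-n).toNat (by omega) w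

lemma center_mul_assoc {u : V} (hu : u ∈ R.center) (n : ℤ) (a w : V) :
    R.mul n (R.mul (-1) u a) w = R.mul (-1) u (R.mul n a w) := by
  have J := R.jacobi 0 n (-1) u a w
  rw [finsum_eq_single _ 0 (fun i hi => by rw [ibin_zero_left hi, zero_smul])] at J
  rw [finsum_eq_single _ 0 (by
    intro i hi
    rw [hu (0 + -1 - i) (by omega), hu (0 + i) (by omega) w, mul_zero_right,
      smul_zero, sub_zero, smul_zero])] at J
  simp only [Nat.cast_zero, add_zero, sub_zero, zero_add, pow_zero, ibin_zero_right,
    one_mul, one_smul] at J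
  rw [hu 0 (by omega) w, mul_zero_right, smul_zero, sub_zero] at J
  exact J

lemma center_mul_comm {u : V} (hu : u ∈ R.center) (n : ℤ) (a w : V) :
    R.mul n a (R.mul (-1) u w) = R.mul (-1) u (R.mul n a w) := by
  have J := R.jacobi (-1) (n + 1) (-1) u a w
  rw [finsum_eq_single _ 0 (by
    intro i hi
    rw [hu (-1 + i) (by omega) a, mul_zero_left, smul_zero])] at J
  rw [finsum_eq_single _ 0 (by
    intro i hi
    rw [hu (-1 + -1 - i) (by omega), hu (-1 + i) (by omega) w, mul_zero_right,
      smul_zero, sub_zero, smul_zero])] at J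
  simp only [Nat.cast_zero, add_zero, sub_zero, zero_add, pow_zero, ibin_zero_right,
    one_mul, one_smul, eps_neg_one] at J
  rw [hu (-1 + -1) (by omega), zero_sub] at J
  rw [show (-1 + (n + 1) : ℤ) = n by ring, show (n + 1 + -1 : ℤ) = n by ring] at J
  rw [center_mul_assoc R hu] at J
  simpa using J.symm

end Aux

open Aux in
/-- If `V` is a simple vertex ring then its center is a field: `𝟙 ≠ 0` and
every nonzero central element has a central inverse for the `-1` product. -/
theorem center_field_of_simple {V : Type*} [AddCommGroup V] [Nontrivial V]
    (R : VertexRing V)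
    (hsimple : ∀ I : AddSubgroup V, R.IsTwoSidedIdeal I → I = ⊥ ∨ I = ⊤) :
    R.one ≠ 0 ∧
    ∀ u : V, u ∈ R.center → u ≠ 0 →
      ∃ v : V, v ∈ R.center ∧ R.mul (-1) u v = R.one := by
  have hone : R.one ≠ 0 := by
    intro h
    obtain ⟨x, y, hxy⟩ := exists_pair_ne V
    have hz : ∀ z : V, z = 0 := fun z => by
      rw [← R.vac_create z, h, mul_zero_right]
    exact hxy ((hz x).trans (hz y).symm)
  refine ⟨hone, ?_⟩
  intro u hu hu0
  set I : AddSubgroup V :=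
    { carrier := Set.range (R.mul (-1) u)
      add_mem' := by
        rintro _ _ ⟨a, rfl⟩ ⟨b, rfl⟩
        exact ⟨a + b, R.add_right _ _ _ _⟩
      zero_mem' := ⟨0, mul_zero_right R _ _⟩
      neg_mem' := by
        rintro _ ⟨a, rfl⟩
        exact ⟨-a, mul_neg_right R _ _ _⟩ } with hIdef
  have hI : ∀ (a x : V) (n : ℤ), x ∈ I → R.mul n a x ∈ I ∧ R.mul n x a ∈ I := by
    rintro a _ n ⟨b, rfl⟩
    exact ⟨⟨R.mul n a b, (center_mul_comm R hu n a b).symm⟩,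
      ⟨R.mul n b a, (center_mul_assoc R hu n b a).symm⟩⟩
  have hItop : I = ⊤ := by
    rcases hsimple I hI with h | h
    · exfalso
      apply hu0
      have hm : u ∈ I := ⟨R.one, R.vac_create u⟩
      rw [h] at hm
      simpa using hm
    · exact h
  obtain ⟨v, hv⟩ : ∃ v, R.mul (-1) u v = R.one := by
    have h1 : R.one ∈ I := by rw [hItop]; trivial
    exact h1
  set K : AddSubgroup V :=
    { carrier := {w | R.mul (-1) u w = 0}
      add_mem' := by
        intro a b ha hb
        simp only [Set.mem_setOf_eq] at ha hb ⊢
        rw [R.add_right, ha, hb, add_zero]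
      zero_mem' := mul_zero_right R _ _
      neg_mem' := by
        intro a ha
        simp only [Set.mem_setOf_eq] at ha ⊢
        rw [mul_neg_right, ha, neg_zero] } with hKdef
  have hK : ∀ (a x : V) (n : ℤ), x ∈ K → R.mul n a x ∈ K ∧ R.mul n x a ∈ K := by
    intro a x n hx
    have hx' : R.mul (-1) u x = 0 := hx
    constructor
    · show R.mul (-1) u (R.mul n a x) = 0
      rw [← center_mul_comm R hu, hx', mul_zero_right]
    · show R.mul (-1) u (R.mul n x a) = 0
      rw [← center_mul_assoc R hu, hx', mul_zero_left]
  have hK0 : K = ⊥ := by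
    rcases hsimple K hK with h | h
    · exact h
    · exfalso
      apply hu0
      have h1 : R.one ∈ K := by rw [h]; trivial
      have h2 : R.mul (-1) u R.one = 0 := h1
      rw [R.vac_create] at h2
      exact h2
  refine ⟨v, ?_, hv⟩
  intro n hn w
  have h1 : R.mul (-1) u (R.mul n v w) = 0 := by
    rw [← center_mul_assoc R hu, hv, one_center R n hn]
  have h2 : R.mul n v w ∈ K := h1
  rw [hK0] at h2
  simpa using h2
end
end
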